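/- (δ-tank lemma, cost bound) Given a TSP tour 𝒜 on V∪{r} and δ ∈ [0,1/2], there exists a feasible CVRP solution whose cost is at most c(𝒜) + (1/(1−δ))·𝒟_small + (2/(1−δ))·𝒟_big − (δ/(1−δ))·𝒟'_big. -/

import Mathlib

open MeasureTheory

/-- Cost of a walk along a list of vertices: sum of costs of consecutive edges. -/
def walkCost {α : Type*} (c : α → α → ℝ) : List α → ℝ
  | [] => 0
  | [_] => 0
  | a :: b :: rest => c a b + walkCost c (b :: rest)

/-- Cost of the tour (cycle) that starts at the depot `r`, visits the clients of `T`
in order, and returns to `r`. -/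
def tourCost {α : Type*} (c : α → α → ℝ) (r : α) (T : List α) : ℝ :=
  walkCost c (r :: (T ++ [r]))


noncomputable def sig {α : Type*} (d : α → ℝ) (δ : ℝ) (v : α) : ℝ :=
  if d v ≤ δ then d v / (1 - δ) else (2 * d v - δ) / (1 - δ)

lemma sig_nonneg {α : Type*} (d : α → ℝ) (δ : ℝ) (v : α) (hδ0 : 0 ≤ δ) (hδ : δ ≤ 1/2)
    (hv : 0 ≤ d v) : 0 ≤ sig d δ v := by
  have h1 : (0:ℝ) < 1 - δ := by linarith
  rw [sig]; split_ifs with h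
  · positivity
  · apply div_nonneg _ (le_of_lt h1); push_neg at h; linarith

lemma sig_ge {α : Type*} (d : α → ℝ) (δ : ℝ) (v : α) (hδ : δ ≤ 1/2) (hv : 0 < d v) :
    d v ≤ (1 - δ) * sig d δ v := by
  have h1 : (0:ℝ) < 1 - δ := by linarith
  rw [sig]; split_ifs with h
  · rw [mul_div_cancel₀ _ (ne_of_gt h1)]
  · rw [mul_div_cancel₀ _ (ne_of_gt h1)]; push_neg at h; linarith

lemma sig_ge' {α : Type*} (d : α → ℝ) (δ : ℝ) (v : α) (hδ : δ ≤ 1/2) :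
    2 * d v - δ ≤ (1 - δ) * sig d δ v := by
  have h1 : (0:ℝ) < 1 - δ := by linarith
  rw [sig]; split_ifs with h
  · rw [mul_div_cancel₀ _ (ne_of_gt h1)]; linarith
  · rw [mul_div_cancel₀ _ (ne_of_gt h1)]

noncomputable def go {α : Type*} (d : α → ℝ) (δ θ : ℝ) : List α → ℝ → List α → List (List α)
  | [], _, acc => [acc]
  | v :: rest, p, acc =>
    if ⌊p + sig d δ v - θ⌋ - ⌊p - θ⌋ = 0 then
      go d δ θ rest (p + sig d δ v) (acc ++ [v])
    else if ⌊p + sig d δ v - θ⌋ - ⌊p - θ⌋ = 1 then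
      if d v ≤ (1 - δ) * (1 - Int.fract (p - θ)) then
        (acc ++ [v]) :: go d δ θ rest (p + sig d δ v) []
      else
        acc :: go d δ θ rest (p + sig d δ v) [v]
    else acc :: [v] :: go d δ θ rest (p + sig d δ v) []

lemma fract_key (x s : ℝ) :
    Int.fract (x + s) = Int.fract x + s - ((⌊x + s⌋ - ⌊x⌋ : ℤ) : ℝ) := by
  unfold Int.fract; push_cast; ring

lemma go_demand {α : Type*} (d : α → ℝ) (δ θ : ℝ) (hδ0 : 0 ≤ δ) (hδ : δ ≤ 1/2) :
    ∀ (l : List α) (p : ℝ) (acc : List α),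
    (∀ v ∈ l, 0 < d v ∧ d v ≤ 1) →
    ((acc.map d).sum ≤ δ + (1 - δ) * Int.fract (p - θ)) →
    ∀ T ∈ go d δ θ l p acc, (T.map d).sum ≤ 1 := by
  intro l
  induction l with
  | nil =>
    intro p acc _ hacc T hT
    have hf1 : Int.fract (p - θ) < 1 := Int.fract_lt_one _
    rw [go] at hT
    simp at hT
    subst hT
    nlinarith
  | cons v rest ih =>
    intro p acc hl hacc T hT
    have hv := hl v (by simp)
    have hrest : ∀ u ∈ rest, 0 < d u ∧ d u ≤ 1 := fun u hu => hl u (by simp [hu])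
    have hf0 : 0 ≤ Int.fract (p - θ) := Int.fract_nonneg _
    have hf1 : Int.fract (p - θ) < 1 := Int.fract_lt_one _
    have hg0 : 0 ≤ Int.fract (p + sig d δ v - θ) := Int.fract_nonneg _
    have hs1 := sig_ge d δ v hδ hv.1
    have hs2 := sig_ge' d δ v hδ
    have key : Int.fract (p + sig d δ v - θ) =
        Int.fract (p - θ) + sig d δ v - ((⌊p + sig d δ v - θ⌋ - ⌊p - θ⌋ : ℤ) : ℝ) := by
      have := fract_key (p - θ) (sig d δ v)
      rw [show p - θ + sig d δ v = p + sig d δ v - θ by ring] at this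
      exact this
    rw [go] at hT
    split_ifs at hT with h1 h2 h3
    · -- m = 0
      refine ih (p + sig d δ v) (acc ++ [v]) hrest ?_ T hT
      rw [h1] at key
      simp at key
      simp only [List.map_append, List.sum_append, List.map_cons, List.map_nil,
        List.sum_cons, List.sum_nil]
      nlinarith
    · -- m = 1, join left
      simp only [List.mem_cons] at hT
      rcases hT with rfl | hT
      · simp only [List.map_append, List.sum_append, List.map_cons, List.map_nil,
          List.sum_cons, List.sum_nil]
        nlinarith
      · refine ih (p + sig d δ v) [] hrest ?_ T hT
        simp
        nlinarith
    · -- m = 1, cut before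
      simp only [List.mem_cons] at hT
      rcases hT with rfl | hT
      · nlinarith
      · refine ih (p + sig d δ v) [v] hrest ?_ T hT
        rw [h2] at key
        push_neg at h3
        simp only [List.map_cons, List.map_nil, List.sum_cons, List.sum_nil]
        push_cast at key
        nlinarith
    · -- m ≥ 2
      simp only [List.mem_cons] at hT
      rcases hT with rfl | rfl | hT
      · nlinarith
      · simp [hv.2]
      · refine ih (p + sig d δ v) [] hrest ?_ T hT
        simp
        nlinarith

lemma go_flatten {α : Type*} (d : α → ℝ) (δ θ : ℝ) (l : List α) (p : ℝ) (acc : List α) :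
    (go d δ θ l p acc).flatten = acc ++ l := by
  induction l generalizing p acc with
  | nil => simp [go]
  | cons v rest ih =>
    rw [go]
    split_ifs <;> simp [ih]

noncomputable def charges {α : Type*} (w s : α → ℝ) (θ : ℝ) : List α → ℝ → ℝ
  | [], _ => 0
  | v :: rest, p =>
      w v * ((⌊p + s v - θ⌋ - ⌊p - θ⌋ : ℤ) : ℝ) + charges w s θ rest (p + s v)

lemma floor_eq_on (x : ℝ) : Set.EqOn (fun θ => ((⌊x - θ⌋ : ℤ) : ℝ))
    (fun θ => (⌊x⌋ : ℝ) - (Set.Ioc (Int.fract x) 1).indicator (fun _ => (1:ℝ)) θ)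
    (Set.Ioc (0:ℝ) 1) := by
  intro θ hθ
  obtain ⟨h0, h1⟩ := hθ
  have hfr : Int.fract x = x - ⌊x⌋ := rfl
  have hfr0 : 0 ≤ Int.fract x := Int.fract_nonneg x
  have hlt := Int.lt_floor_add_one x
  have hle := Int.floor_le x
  by_cases h : Int.fract x < θ
  · have hmem : θ ∈ Set.Ioc (Int.fract x) 1 := ⟨h, h1⟩
    have hfl : ⌊x - θ⌋ = ⌊x⌋ - 1 := by
      rw [Int.floor_eq_iff]
      constructor
      · push_cast; linarith
      · push_cast; linarith
    simp only [hfl, Set.indicator_of_mem hmem]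
    push_cast; ring
  · push_neg at h
    have hmem : θ ∉ Set.Ioc (Int.fract x) 1 := by
      intro hc; exact absurd hc.1 (not_lt.mpr h)
    have hfl : ⌊x - θ⌋ = ⌊x⌋ := by
      rw [Int.floor_eq_iff]
      constructor
      · push_cast; linarith
      · push_cast; linarith
    simp only [hfl, Set.indicator_of_notMem hmem, sub_zero]

lemma integrableOn_indicator_one (a : ℝ) :
    IntegrableOn ((Set.Ioc a 1).indicator (fun _ => (1:ℝ))) (Set.Ioc (0:ℝ) 1) volume := by
  apply Integrable.indicator _ measurableSet_Ioc
  exact integrableOn_const (by simp [Real.volume_Ioc])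

lemma integrableOn_floor (x : ℝ) :
    IntegrableOn (fun θ => ((⌊x - θ⌋ : ℤ) : ℝ)) (Set.Ioc (0:ℝ) 1) volume := by
  have h1 : IntegrableOn (fun _ : ℝ => ((⌊x⌋:ℤ) : ℝ)) (Set.Ioc (0:ℝ) 1) volume :=
    integrableOn_const (by simp [Real.volume_Ioc])
  have := (h1.sub (integrableOn_indicator_one (Int.fract x)))
  exact IntegrableOn.congr_fun this (fun θ hθ => (floor_eq_on x hθ).symm) measurableSet_Ioc

lemma integral_floor (x : ℝ) :
    ∫ θ in Set.Ioc (0:ℝ) 1, ((⌊x - θ⌋ : ℤ) : ℝ) = x - 1 := by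
  rw [setIntegral_congr_fun measurableSet_Ioc (floor_eq_on x)]
  have h1 : IntegrableOn (fun _ : ℝ => ((⌊x⌋:ℤ) : ℝ)) (Set.Ioc (0:ℝ) 1) volume :=
    integrableOn_const (by simp [Real.volume_Ioc])
  rw [integral_sub h1 (integrableOn_indicator_one (Int.fract x))]
  have hfr0 : 0 ≤ Int.fract x := Int.fract_nonneg x
  have hfr1 : Int.fract x < 1 := Int.fract_lt_one x
  rw [setIntegral_const, setIntegral_indicator measurableSet_Ioc]
  have hinter : Set.Ioc (0:ℝ) 1 ∩ Set.Ioc (Int.fract x) 1 = Set.Ioc (Int.fract x) 1 := by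
    rw [Set.Ioc_inter_Ioc, max_eq_right hfr0, min_self]
  rw [hinter, setIntegral_const]
  simp only [smul_eq_mul, mul_one, Real.volume_Ioc]
  rw [Real.volume_real_Ioc_of_le (by linarith), Real.volume_real_Ioc_of_le (by linarith)]
  have := Int.floor_add_fract x
  linarith

lemma charges_integrableOn {α : Type*} (w s : α → ℝ) (l : List α) (p : ℝ) :
    IntegrableOn (fun θ => charges w s θ l p) (Set.Ioc (0:ℝ) 1) volume := by
  induction l generalizing p with
  | nil => simp only [charges]; exact integrable_zero _ _ _
  | cons v t ih =>
    simp only [charges, Int.cast_sub]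
    have h1 : IntegrableOn (fun θ => w v * (((⌊p + s v - θ⌋:ℤ):ℝ) - ((⌊p - θ⌋:ℤ):ℝ)))
        (Set.Ioc (0:ℝ) 1) volume :=
      ((integrableOn_floor (p + s v)).sub (integrableOn_floor p)).const_mul (w v)
    exact h1.add (ih (p + s v))

lemma charges_integral {α : Type*} (w s : α → ℝ) (l : List α) (p : ℝ) :
    ∫ θ in Set.Ioc (0:ℝ) 1, charges w s θ l p = (l.map (fun v => w v * s v)).sum := by
  induction l generalizing p with
  | nil => simp [charges]
  | cons v t ih =>
    simp only [charges, Int.cast_sub, List.map_cons, List.sum_cons]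
    have h1 : IntegrableOn (fun θ => w v * (((⌊p + s v - θ⌋:ℤ):ℝ) - ((⌊p - θ⌋:ℤ):ℝ)))
        (Set.Ioc (0:ℝ) 1) volume :=
      ((integrableOn_floor (p + s v)).sub (integrableOn_floor p)).const_mul (w v)
    rw [integral_add h1 (charges_integrableOn w s t (p + s v))]
    rw [ih (p + s v)]
    congr 1
    rw [integral_const_mul]
    rw [integral_sub (integrableOn_floor (p + s v)) (integrableOn_floor p)]
    rw [integral_floor, integral_floor]
    ring

lemma exists_good_theta {α : Type*} (w s : α → ℝ) (l : List α) :
    ∃ θ ∈ Set.Ioc (0:ℝ) 1, charges w s θ l 0 ≤ (l.map (fun v => w v * s v)).sum := by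
  have huniv : (volume.restrict (Set.Ioc (0:ℝ) 1)) Set.univ = 1 := by
    simp [Real.volume_Ioc]
  have hne : volume.restrict (Set.Ioc (0:ℝ) 1) ≠ 0 := by
    intro h
    rw [h] at huniv
    simp at huniv
  have hnull : (volume.restrict (Set.Ioc (0:ℝ) 1)) (Set.Ioc (0:ℝ) 1)ᶜ = 0 := by
    rw [Measure.restrict_apply (measurableSet_Ioc.compl)]
    simp
  obtain ⟨θ, hθmem, hθ⟩ := exists_notMem_null_le_average hne (charges_integrableOn w s l 0) hnull
  refine ⟨θ, by simpa using hθmem, ?_⟩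
  rw [average_eq, measureReal_def, huniv] at hθ
  simpa [charges_integral w s l 0] using hθ


section cost
variable {α : Type*} (c : α → α → ℝ)

lemma walkCost_cons_cons (a b : α) (t : List α) :
    walkCost c (a :: b :: t) = c a b + walkCost c (b :: t) := rfl

lemma walkCost_append_last (a : α) (xs : List α) (y : α) :
    walkCost c (a :: (xs ++ [y])) = walkCost c (a :: xs) + c (xs.getLastD a) y := by
  induction xs generalizing a with
  | nil => simp [walkCost]
  | cons b t ih =>
    simp only [List.cons_append, walkCost_cons_cons, List.getLastD_cons]
    rw [ih b]
    ring

lemma tourCost_eq (r : α) (T : List α) :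
    tourCost c r T = walkCost c (r :: T) + c (T.getLastD r) r := by
  rw [tourCost, walkCost_append_last]

variable (r : α)
variable (hsymm : ∀ x y, c x y = c y x)
    (htri : ∀ x y z, c x z ≤ c x y + c y z)
    (hnonneg : ∀ x y, 0 ≤ c x y)
    (hself : ∀ x, c x x = 0)

include hsymm htri hnonneg hself

lemma walk_start_swap (v : α) (l : List α) :
    walkCost c (r :: l) ≤ c r v + walkCost c (v :: l) := by
  cases l with
  | nil => simpa [walkCost] using hnonneg r v
  | cons w t =>
    rw [walkCost_cons_cons, walkCost_cons_cons]
    have := htri r v w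
    linarith [htri r v w]

lemma go_cost (d : α → ℝ) (δ θ : ℝ) (hδ0 : 0 ≤ δ) (hδ : δ ≤ 1/2) :
    ∀ (l : List α) (p : ℝ) (acc : List α), (∀ v ∈ l, 0 < d v) →
    ((go d δ θ l p acc).map (tourCost c r)).sum ≤
      walkCost c (r :: acc) + walkCost c (acc.getLastD r :: (l ++ [r]))
        + charges (fun v => 2 * c r v) (sig d δ) θ l p := by
  intro l
  induction l with
  | nil =>
    intro p acc _
    rw [go]
    simp only [List.map_cons, List.map_nil, List.sum_cons, List.sum_nil, add_zero,
      List.nil_append, charges]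
    rw [tourCost_eq]
    simp [walkCost]
  | cons v rest ih =>
    intro p acc hl
    have hv := hl v (by simp)
    have hrest : ∀ u ∈ rest, 0 < d u := fun u hu => hl u (by simp [hu])
    have hsig : 0 ≤ sig d δ v := by
      rw [sig]; split_ifs with h
      · have : (0:ℝ) < 1 - δ := by linarith
        positivity
      · push_neg at h
        apply div_nonneg (by linarith) (by linarith)
    have hm0 : (0:ℤ) ≤ ⌊p + sig d δ v - θ⌋ - ⌊p - θ⌋ := by
      have := Int.floor_le_floor (R := ℝ) (show p - θ ≤ p + sig d δ v - θ by linarith)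
      omega
    set z := acc.getLastD r with hz
    have hwalk : walkCost c (z :: ((v :: rest) ++ [r]))
        = c z v + walkCost c (v :: (rest ++ [r])) := rfl
    rw [go]
    split_ifs with h1 h2 h3
    · -- m = 0
      have := ih (p + sig d δ v) (acc ++ [v]) hrest
      rw [List.getLastD_concat, walkCost_append_last] at this
      refine le_trans this ?_
      simp only [charges, h1, hwalk]
      push_cast
      linarith [this]
    · -- m = 1, join left
      simp only [List.map_cons, List.sum_cons]
      have hIH := ih (p + sig d δ v) [] hrest
      simp only [List.getLastD_nil] at hIH
      have hTC : tourCost c r (acc ++ [v]) = walkCost c (r :: acc) + c z v + c v r := by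
        rw [tourCost_eq, List.getLastD_concat, walkCost_append_last]
      have hws := walk_start_swap c r hsymm htri hnonneg hself v (rest ++ [r])
      simp only [charges, h2, hwalk]
      push_cast
      have : walkCost c (r :: ([] : List α)) = 0 := rfl
      rw [this, zero_add] at hIH
      rw [hTC]
      have hsy : c v r = c r v := hsymm v r
      linarith
    · -- m = 1, cut before
      simp only [List.map_cons, List.sum_cons]
      have hIH := ih (p + sig d δ v) [v] hrest
      have hls : [v].getLastD r = v := rfl
      rw [hls] at hIH
      have hTC : tourCost c r acc = walkCost c (r :: acc) + c z r := by
        rw [tourCost_eq]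
      have hwv : walkCost c (r :: [v]) = c r v := by simp [walkCost]
      rw [hwv] at hIH
      simp only [charges, h2, hwalk]
      push_cast
      rw [hTC]
      have htr : c z r ≤ c z v + c v r := htri z v r
      have hsy : c v r = c r v := hsymm v r
      linarith
    · -- m ≥ 2
      have hm2 : (2:ℤ) ≤ ⌊p + sig d δ v - θ⌋ - ⌊p - θ⌋ := by omega
      simp only [List.map_cons, List.sum_cons]
      have hIH := ih (p + sig d δ v) [] hrest
      simp only [List.getLastD_nil] at hIH
      have h0 : walkCost c (r :: ([] : List α)) = 0 := rfl
      rw [h0, zero_add] at hIH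
      have hTC : tourCost c r acc = walkCost c (r :: acc) + c z r := by rw [tourCost_eq]
      have hTCv : tourCost c r [v] = c r v + c v r := by
        simp [tourCost, walkCost]
      have hws := walk_start_swap c r hsymm htri hnonneg hself v (rest ++ [r])
      simp only [charges, hwalk]
      have htr : c z r ≤ c z v + c v r := htri z v r
      have hsy : c v r = c r v := hsymm v r
      have hcast : (4:ℝ) ≤ 2 * ((⌊p + sig d δ v - θ⌋ - ⌊p - θ⌋ : ℤ) : ℝ) := by
        have : ((2:ℤ):ℝ) ≤ ((⌊p + sig d δ v - θ⌋ - ⌊p - θ⌋ : ℤ) : ℝ) := by exact_mod_cast hm2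
        push_cast at this ⊢
        linarith
      rw [hTC, hTCv]
      nlinarith [hnonneg r v]
end cost


lemma sum_map_eq_sum_toFinset {α : Type*} [DecidableEq α] (l : List α) (h : l.Nodup)
    (f : α → ℝ) : (l.map f).sum = ∑ v ∈ l.toFinset, f v := by
  induction l with
  | nil => simp
  | cons a t ih =>
    rw [List.toFinset_cons, List.map_cons, List.sum_cons,
      Finset.sum_insert (by simpa using (List.nodup_cons.mp h).1), ih (List.nodup_cons.mp h).2]


lemma sig_sum_eq {α : Type*} [DecidableEq α] (V : Finset α) (c d : α → ℝ) (δ : ℝ)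
    (h1δ : (0:ℝ) < 1 - δ) :
    ∑ v ∈ V, 2 * c v * sig d δ v =
      (1 / (1 - δ)) * ∑ v ∈ V.filter (fun v => d v ≤ δ), 2 * d v * c v
      + ((2 / (1 - δ)) * ∑ v ∈ V.filter (fun v => δ < d v), 2 * d v * c v
      - (δ / (1 - δ)) * ∑ v ∈ V.filter (fun v => δ < d v), 2 * c v) := by
  rw [← Finset.sum_filter_add_sum_filter_not V (fun v => d v ≤ δ)]
  congr 1
  · rw [Finset.mul_sum]
    apply Finset.sum_congr rfl
    intro v hv
    rw [sig, if_pos (Finset.mem_filter.mp hv).2]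
    field_simp
  · have hfilter : V.filter (fun v => ¬ d v ≤ δ) = V.filter (fun v => δ < d v) := by
      apply Finset.filter_congr
      intro x _
      simp [not_le]
    rw [hfilter, Finset.mul_sum, Finset.mul_sum, ← Finset.sum_sub_distrib]
    apply Finset.sum_congr rfl
    intro v hv
    rw [sig, if_neg (not_le.mpr (Finset.mem_filter.mp hv).2)]
    field_simp

/-- The δ-tank lemma: given a TSP tour `A` on all the clients and the depot, there is
a feasible CVRP solution of cost at most
`c(A) + (1/(1-δ))·𝒟_small + (2/(1-δ))·𝒟_big − (δ/(1-δ))·𝒟'_big`,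
where clients with demand at most `δ` are small and the others are big. -/
theorem delta_tank_lemma {α : Type*} [DecidableEq α]
    (V : Finset α) (r : α) (hr : r ∉ V)
    (c : α → α → ℝ) (d : α → ℝ)
    (hsymm : ∀ x y, c x y = c y x)
    (htri : ∀ x y z, c x z ≤ c x y + c y z)
    (hnonneg : ∀ x y, 0 ≤ c x y)
    (hself : ∀ x, c x x = 0)
    (hd : ∀ v ∈ V, 0 < d v ∧ d v ≤ 1)
    (δ : ℝ) (hδ0 : 0 ≤ δ) (hδ : δ ≤ 1 / 2)
    (A : List α) (hA : ∀ v, v ∈ A ↔ v ∈ V) (hAnodup : A.Nodup) :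
    ∃ S : List (List α),
      (∀ v, v ∈ V ↔ v ∈ S.flatten) ∧ S.flatten.Nodup ∧
      (∀ T ∈ S, (T.map d).sum ≤ 1) ∧
      (S.map (tourCost c r)).sum ≤
        tourCost c r A
          + (1 / (1 - δ)) * ∑ v ∈ V.filter (fun v => d v ≤ δ), 2 * d v * c r v
          + (2 / (1 - δ)) * ∑ v ∈ V.filter (fun v => δ < d v), 2 * d v * c r v
          - (δ / (1 - δ)) * ∑ v ∈ V.filter (fun v => δ < d v), 2 * c r v := by
  have h1δ : (0:ℝ) < 1 - δ := by linarith
  have hlA : ∀ v ∈ A, 0 < d v ∧ d v ≤ 1 := fun v hv => hd v ((hA v).1 hv)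
  obtain ⟨θ, hθIoc, hθ⟩ := exists_good_theta (fun v => 2 * c r v) (sig d δ) A
  refine ⟨go d δ θ A 0 [], ?_, ?_, ?_, ?_⟩
  · intro v
    rw [go_flatten]
    simp [hA]
  · rw [go_flatten]
    simpa using hAnodup
  · apply go_demand d δ θ hδ0 hδ A 0 [] hlA
    have := Int.fract_nonneg (0 - θ)
    simp only [List.map_nil, List.sum_nil]
    nlinarith
  · have hc := go_cost c r hsymm htri hnonneg hself d δ θ hδ0 hδ A 0 []
      (fun v hv => (hlA v hv).1)
    have h0 : walkCost c (r :: ([] : List α)) = 0 := rfl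
    have hgl : (([] : List α)).getLastD r = r := rfl
    rw [h0, hgl, zero_add] at hc
    have hTA : walkCost c (r :: (A ++ [r])) = tourCost c r A := rfl
    rw [hTA] at hc
    have hVA : A.toFinset = V := by
      ext v
      rw [List.mem_toFinset, hA]
    have hlist : (A.map (fun v => (fun v => 2 * c r v) v * sig d δ v)).sum
        = ∑ v ∈ V, 2 * c r v * sig d δ v := by
      rw [sum_map_eq_sum_toFinset A hAnodup, hVA]
    rw [hlist] at hθ
    have hkey := sig_sum_eq V (fun v => c r v) d δ h1δ
    linarith
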